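/- (Fine's classical patching theorem.) Given a factorizable model μ^{ab}, μ^{ab'}, μ^{a'b}, μ^{a'b'} for the CHSH scenario, there exists a joint probability measure ν : Bool → Bool → Bool → Bool → K → ℝ, nonnegative with total sum 1, having the four factorizable measures as marginals: for all i, i', j, j' ∈ Bool and k ∈ K, ∑_{i',j'} ν(i,i',j,j',k) = μ^{ab}(i,j,k), ∑_{i',j} ν(i,i',j,j',k) = μ^{ab'}(i,j',k), ∑_{i,j'} ν(i,i',j,j',k) = μ^{a'b}(i',j,k), and ∑_{i,j} ν(i,i',j,j',k) = μ^{a'b'}(i',j',k). Consequently, summing ν further over k ∈ K yields a joint probability distribution on the beam-events alone that has the four experimental probability distributions ∑_k μ^{αβ} as marginals. -/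

import Mathlib

private lemma sum_k_comm {K : Type*} [Fintype K] (f : Bool → Bool → K → ℝ) :
    ∑ k, ∑ x, ∑ y, f x y k = ∑ x, ∑ y, ∑ k, f x y k := by
  rw [Finset.sum_comm]
  exact Finset.sum_congr rfl fun x _ => Finset.sum_comm

private lemma fine_patch_cell (f g : Bool → ℝ) (Z m c d : ℝ)
    (hf : ∑ x, f x = Z) (hg : ∑ y, g y = Z) (hZ : Z ≠ 0)
    (hm : m * Z = c * d) :
    ∑ x : Bool, ∑ y : Bool, c * f x * d * g y / Z ^ 3 = m := by
  have h1 : ∑ x : Bool, ∑ y : Bool, c * f x * d * g y / Z ^ 3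
      = c * (∑ x : Bool, f x) * d * (∑ y : Bool, g y) / Z ^ 3 := by
    simp only [Fintype.sum_bool]
    ring
  rw [h1, hf, hg]
  field_simp
  linear_combination (-1 : ℝ) * hm

/-- Fine's classical patching theorem: Given a factorizable model
`μab, μab', μa'b, μa'b'` for the CHSH scenario (four nonnegative normalised measures on
beam-events × hidden histories `K`, agreeing on common marginals and each factorizing
conditionally on the hidden history), there is a joint probability measure
`ν : Bool → Bool → Bool → Bool → K → ℝ` having the four measures as marginals, and hence
(summing over `K`) a joint distribution on the beam-events alone having the four
experimental distributions as marginals. -/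
theorem fine_classical_patching
    {K : Type*} [Fintype K]
    (μab μab' μa'b μa'b' : Bool → Bool → K → ℝ)
    -- nonnegativity
    (hab_nonneg : ∀ i j k, 0 ≤ μab i j k)
    (hab'_nonneg : ∀ i j' k, 0 ≤ μab' i j' k)
    (ha'b_nonneg : ∀ i' j k, 0 ≤ μa'b i' j k)
    (ha'b'_nonneg : ∀ i' j' k, 0 ≤ μa'b' i' j' k)
    -- normalisation
    (hab_norm : ∑ i, ∑ j, ∑ k, μab i j k = 1)
    (hab'_norm : ∑ i, ∑ j', ∑ k, μab' i j' k = 1)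
    (ha'b_norm : ∑ i', ∑ j, ∑ k, μa'b i' j k = 1)
    (ha'b'_norm : ∑ i', ∑ j', ∑ k, μa'b' i' j' k = 1)
    -- agreement: common K-marginal μ(k)
    (hZ1 : ∀ k, ∑ i, ∑ j, μab i j k = ∑ i, ∑ j', μab' i j' k)
    (hZ2 : ∀ k, ∑ i, ∑ j, μab i j k = ∑ i', ∑ j, μa'b i' j k)
    (hZ3 : ∀ k, ∑ i, ∑ j, μab i j k = ∑ i', ∑ j', μa'b' i' j' k)
    -- agreement: single-wing marginals
    (ha : ∀ i k, ∑ j, μab i j k = ∑ j', μab' i j' k)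
    (ha' : ∀ i' k, ∑ j, μa'b i' j k = ∑ j', μa'b' i' j' k)
    (hb : ∀ j k, ∑ i, μab i j k = ∑ i', μa'b i' j k)
    (hb' : ∀ j' k, ∑ i, μab' i j' k = ∑ i', μa'b' i' j' k)
    -- factorizability conditional on the hidden history k
    (hfac_ab : ∀ i j k,
      μab i j k * (∑ i₀, ∑ j₀, μab i₀ j₀ k)
        = (∑ j₀, μab i j₀ k) * (∑ i₀, μab i₀ j k))
    (hfac_ab' : ∀ i j' k,
      μab' i j' k * (∑ i₀, ∑ j₀, μab' i₀ j₀ k)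
        = (∑ j₀, μab' i j₀ k) * (∑ i₀, μab' i₀ j' k))
    (hfac_a'b : ∀ i' j k,
      μa'b i' j k * (∑ i₀, ∑ j₀, μa'b i₀ j₀ k)
        = (∑ j₀, μa'b i' j₀ k) * (∑ i₀, μa'b i₀ j k))
    (hfac_a'b' : ∀ i' j' k,
      μa'b' i' j' k * (∑ i₀, ∑ j₀, μa'b' i₀ j₀ k)
        = (∑ j₀, μa'b' i' j₀ k) * (∑ i₀, μa'b' i₀ j' k)) :
    ∃ ν : Bool → Bool → Bool → Bool → K → ℝ,
      (∀ i i' j j' k, 0 ≤ ν i i' j j' k) ∧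
      (∑ i, ∑ i', ∑ j, ∑ j', ∑ k, ν i i' j j' k = 1) ∧
      -- the four factorizable measures are marginals of ν
      (∀ i j k, ∑ i', ∑ j', ν i i' j j' k = μab i j k) ∧
      (∀ i j' k, ∑ i', ∑ j, ν i i' j j' k = μab' i j' k) ∧
      (∀ i' j k, ∑ i, ∑ j', ν i i' j j' k = μa'b i' j k) ∧
      (∀ i' j' k, ∑ i, ∑ j, ν i i' j j' k = μa'b' i' j' k) ∧
      -- hence the experimental distributions are marginals of ∑_k ν
      (∀ i j, ∑ i', ∑ j', ∑ k, ν i i' j j' k = ∑ k, μab i j k) ∧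
      (∀ i j', ∑ i', ∑ j, ∑ k, ν i i' j j' k = ∑ k, μab' i j' k) ∧
      (∀ i' j, ∑ i, ∑ j', ∑ k, ν i i' j j' k = ∑ k, μa'b i' j k) ∧
      (∀ i' j', ∑ i, ∑ j, ∑ k, ν i i' j j' k = ∑ k, μa'b' i' j' k) := by
  classical
  set ν : Bool → Bool → Bool → Bool → K → ℝ := fun i i' j j' k =>
    if (∑ i₀, ∑ j₀, μab i₀ j₀ k) = 0 then 0
    else (∑ j₀, μab i j₀ k) * (∑ j₀, μa'b i' j₀ k) * (∑ i₀, μab i₀ j k)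
        * (∑ i₀, μab' i₀ j' k) / (∑ i₀, ∑ j₀, μab i₀ j₀ k) ^ 3 with hν
  -- zero lemmas
  have habZ : ∀ k, (∑ i₀, ∑ j₀, μab i₀ j₀ k) = 0 → ∀ i j, μab i j k = 0 := by
    intro k hk i j
    have h := (Finset.sum_eq_zero_iff_of_nonneg
      (fun i _ => Finset.sum_nonneg fun j _ => hab_nonneg i j k)).mp hk i (Finset.mem_univ i)
    exact (Finset.sum_eq_zero_iff_of_nonneg (fun j _ => hab_nonneg i j k)).mp h j (Finset.mem_univ j)
  have hab'Z : ∀ k, (∑ i₀, ∑ j₀, μab i₀ j₀ k) = 0 → ∀ i j', μab' i j' k = 0 := by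
    intro k hk i j'
    have hk' : (∑ i₀, ∑ j₀, μab' i₀ j₀ k) = 0 := by rw [← hZ1 k]; exact hk
    have h := (Finset.sum_eq_zero_iff_of_nonneg
      (fun i _ => Finset.sum_nonneg fun j _ => hab'_nonneg i j k)).mp hk' i (Finset.mem_univ i)
    exact (Finset.sum_eq_zero_iff_of_nonneg (fun j _ => hab'_nonneg i j k)).mp h j' (Finset.mem_univ j')
  have ha'bZ : ∀ k, (∑ i₀, ∑ j₀, μab i₀ j₀ k) = 0 → ∀ i' j, μa'b i' j k = 0 := by
    intro k hk i' j
    have hk' : (∑ i₀, ∑ j₀, μa'b i₀ j₀ k) = 0 := by rw [← hZ2 k]; exact hk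
    have h := (Finset.sum_eq_zero_iff_of_nonneg
      (fun i _ => Finset.sum_nonneg fun j _ => ha'b_nonneg i j k)).mp hk' i' (Finset.mem_univ i')
    exact (Finset.sum_eq_zero_iff_of_nonneg (fun j _ => ha'b_nonneg i' j k)).mp h j (Finset.mem_univ j)
  have ha'b'Z : ∀ k, (∑ i₀, ∑ j₀, μab i₀ j₀ k) = 0 → ∀ i' j', μa'b' i' j' k = 0 := by
    intro k hk i' j'
    have hk' : (∑ i₀, ∑ j₀, μa'b' i₀ j₀ k) = 0 := by rw [← hZ3 k]; exact hk
    have h := (Finset.sum_eq_zero_iff_of_nonneg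
      (fun i _ => Finset.sum_nonneg fun j _ => ha'b'_nonneg i j k)).mp hk' i' (Finset.mem_univ i')
    exact (Finset.sum_eq_zero_iff_of_nonneg (fun j _ => ha'b'_nonneg i' j k)).mp h j' (Finset.mem_univ j')
  -- sum facts
  have hfA' : ∀ k, ∑ x : Bool, ∑ j₀, μa'b x j₀ k = ∑ i₀, ∑ j₀, μab i₀ j₀ k := fun k => (hZ2 k).symm
  have hgB' : ∀ k, ∑ y : Bool, ∑ i₀, μab' i₀ y k = ∑ i₀, ∑ j₀, μab i₀ j₀ k := by
    intro k
    rw [Finset.sum_comm]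
    exact (hZ1 k).symm
  have hfA : ∀ k, ∑ x : Bool, ∑ j₀, μab x j₀ k = ∑ i₀, ∑ j₀, μab i₀ j₀ k := fun k => rfl
  have hgB : ∀ k, ∑ y : Bool, ∑ i₀, μab i₀ y k = ∑ i₀, ∑ j₀, μab i₀ j₀ k := fun k => Finset.sum_comm
  -- pointwise marginals
  have M1 : ∀ i j k, ∑ i', ∑ j', ν i i' j j' k = μab i j k := by
    intro i j k
    by_cases hz : (∑ i₀, ∑ j₀, μab i₀ j₀ k) = 0
    · simp only [hν, if_pos hz, Finset.sum_const_zero]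
      exact (habZ k hz i j).symm
    · simp only [hν, if_neg hz]
      exact fine_patch_cell _ _ _ _ _ _ (hfA' k) (hgB' k) hz (hfac_ab i j k)
  have M2 : ∀ i j' k, ∑ i', ∑ j, ν i i' j j' k = μab' i j' k := by
    intro i j' k
    by_cases hz : (∑ i₀, ∑ j₀, μab i₀ j₀ k) = 0
    · simp only [hν, if_pos hz, Finset.sum_const_zero]
      exact (hab'Z k hz i j').symm
    · simp only [hν, if_neg hz]
      have hm : μab' i j' k * (∑ i₀, ∑ j₀, μab i₀ j₀ k)
          = (∑ j₀, μab i j₀ k) * (∑ i₀, μab' i₀ j' k) := by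
        rw [hZ1 k, ha i k]
        exact hfac_ab' i j' k
      calc ∑ i', ∑ j, (∑ j₀, μab i j₀ k) * (∑ j₀, μa'b i' j₀ k) * (∑ i₀, μab i₀ j k)
              * (∑ i₀, μab' i₀ j' k) / (∑ i₀, ∑ j₀, μab i₀ j₀ k) ^ 3
          = ∑ i', ∑ j, ((∑ j₀, μab i j₀ k) * (∑ i₀, μab' i₀ j' k)) * (∑ j₀, μa'b i' j₀ k)
              * 1 * (∑ i₀, μab i₀ j k) / (∑ i₀, ∑ j₀, μab i₀ j₀ k) ^ 3 :=
            Finset.sum_congr rfl fun _ _ => Finset.sum_congr rfl fun _ _ => by ring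
        _ = μab' i j' k := by
            refine fine_patch_cell _ _ _ _ _ _ (hfA' k) ?_ hz ?_
            · simpa using hgB k
            · rw [mul_one]; exact hm
  have M3 : ∀ i' j k, ∑ i, ∑ j', ν i i' j j' k = μa'b i' j k := by
    intro i' j k
    by_cases hz : (∑ i₀, ∑ j₀, μab i₀ j₀ k) = 0
    · simp only [hν, if_pos hz, Finset.sum_const_zero]
      exact (ha'bZ k hz i' j).symm
    · simp only [hν, if_neg hz]
      have hm : μa'b i' j k * (∑ i₀, ∑ j₀, μab i₀ j₀ k)
          = (∑ j₀, μa'b i' j₀ k) * (∑ i₀, μab i₀ j k) := by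
        rw [hZ2 k, hb j k]
        exact hfac_a'b i' j k
      calc ∑ i, ∑ j', (∑ j₀, μab i j₀ k) * (∑ j₀, μa'b i' j₀ k) * (∑ i₀, μab i₀ j k)
              * (∑ i₀, μab' i₀ j' k) / (∑ i₀, ∑ j₀, μab i₀ j₀ k) ^ 3
          = ∑ i, ∑ j', ((∑ j₀, μa'b i' j₀ k) * (∑ i₀, μab i₀ j k)) * (∑ j₀, μab i j₀ k)
              * 1 * (∑ i₀, μab' i₀ j' k) / (∑ i₀, ∑ j₀, μab i₀ j₀ k) ^ 3 :=
            Finset.sum_congr rfl fun _ _ => Finset.sum_congr rfl fun _ _ => by ring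
        _ = μa'b i' j k := by
            refine fine_patch_cell _ _ _ _ _ _ (hfA k) (hgB' k) hz ?_
            rw [mul_one]; exact hm
  have M4 : ∀ i' j' k, ∑ i, ∑ j, ν i i' j j' k = μa'b' i' j' k := by
    intro i' j' k
    by_cases hz : (∑ i₀, ∑ j₀, μab i₀ j₀ k) = 0
    · simp only [hν, if_pos hz, Finset.sum_const_zero]
      exact (ha'b'Z k hz i' j').symm
    · simp only [hν, if_neg hz]
      have hm : μa'b' i' j' k * (∑ i₀, ∑ j₀, μab i₀ j₀ k)
          = (∑ j₀, μa'b i' j₀ k) * (∑ i₀, μab' i₀ j' k) := by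
        rw [hZ3 k, ha' i' k, hb' j' k]
        exact hfac_a'b' i' j' k
      calc ∑ i, ∑ j, (∑ j₀, μab i j₀ k) * (∑ j₀, μa'b i' j₀ k) * (∑ i₀, μab i₀ j k)
              * (∑ i₀, μab' i₀ j' k) / (∑ i₀, ∑ j₀, μab i₀ j₀ k) ^ 3
          = ∑ i, ∑ j, ((∑ j₀, μa'b i' j₀ k) * (∑ i₀, μab' i₀ j' k)) * (∑ j₀, μab i j₀ k)
              * 1 * (∑ i₀, μab i₀ j k) / (∑ i₀, ∑ j₀, μab i₀ j₀ k) ^ 3 :=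
            Finset.sum_congr rfl fun _ _ => Finset.sum_congr rfl fun _ _ => by ring
        _ = μa'b' i' j' k := by
            refine fine_patch_cell _ _ _ _ _ _ (hfA k) ?_ hz ?_
            · simpa using hgB k
            · rw [mul_one]; exact hm
  -- nonnegativity
  have hnn : ∀ i i' j j' k, 0 ≤ ν i i' j j' k := by
    intro i i' j j' k
    simp only [hν]
    split
    · exact le_refl 0
    · apply div_nonneg
      · apply mul_nonneg
        apply mul_nonneg
        apply mul_nonneg
        · exact Finset.sum_nonneg fun _ _ => hab_nonneg _ _ _
        · exact Finset.sum_nonneg fun _ _ => ha'b_nonneg _ _ _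
        · exact Finset.sum_nonneg fun _ _ => hab_nonneg _ _ _
        · exact Finset.sum_nonneg fun _ _ => hab'_nonneg _ _ _
      · exact pow_nonneg (Finset.sum_nonneg fun _ _ =>
          Finset.sum_nonneg fun _ _ => hab_nonneg _ _ _) 3
  -- total per k
  have htot : ∀ k, ∑ i, ∑ i', ∑ j, ∑ j', ν i i' j j' k = ∑ i₀, ∑ j₀, μab i₀ j₀ k := by
    intro k
    calc ∑ i, ∑ i', ∑ j, ∑ j', ν i i' j j' k
        = ∑ i, ∑ j, ∑ i', ∑ j', ν i i' j j' k :=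
          Finset.sum_congr rfl fun i _ => Finset.sum_comm
      _ = ∑ i₀, ∑ j₀, μab i₀ j₀ k :=
          Finset.sum_congr rfl fun i _ => Finset.sum_congr rfl fun j _ => M1 i j k
  refine ⟨ν, hnn, ?_, M1, M2, M3, M4, ?_, ?_, ?_, ?_⟩
  · -- normalisation
    have h5 : ∑ i, ∑ i', ∑ j, ∑ j', ∑ k, ν i i' j j' k
        = ∑ k, ∑ i, ∑ i', ∑ j, ∑ j', ν i i' j j' k := by
      calc ∑ i, ∑ i', ∑ j, ∑ j', ∑ k, ν i i' j j' k
          = ∑ i, ∑ i', ∑ k, ∑ j, ∑ j', ν i i' j j' k :=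
            Finset.sum_congr rfl fun i _ => Finset.sum_congr rfl fun i' _ =>
              (sum_k_comm fun j j' k => ν i i' j j' k).symm
        _ = ∑ k, ∑ i, ∑ i', ∑ j, ∑ j', ν i i' j j' k :=
            (sum_k_comm fun i i' k => ∑ j, ∑ j', ν i i' j j' k).symm
    rw [h5]
    have h6 : ∑ k, ∑ i, ∑ i', ∑ j, ∑ j', ν i i' j j' k
        = ∑ k, ∑ i₀, ∑ j₀, μab i₀ j₀ k :=
      Finset.sum_congr rfl fun k _ => htot k
    rw [h6, sum_k_comm]
    exact hab_norm
  · intro i j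
    rw [← sum_k_comm fun i' j' k => ν i i' j j' k]
    exact Finset.sum_congr rfl fun k _ => M1 i j k
  · intro i j'
    rw [← sum_k_comm fun i' j k => ν i i' j j' k]
    exact Finset.sum_congr rfl fun k _ => M2 i j' k
  · intro i' j
    rw [← sum_k_comm fun i j' k => ν i i' j j' k]
    exact Finset.sum_congr rfl fun k _ => M3 i' j k
  · intro i' j'
    rw [← sum_k_comm fun i j k => ν i i' j j' k]
    exact Finset.sum_congr rfl fun k _ => M4 i' j' k
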